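/- arXiv:1712.07264 — 3 statements merged into one kernel-verified Lean document; each statement's English description precedes it below -/
import Mathlib

section
/- Let f : ℝ → ℂ be a continuous function. Then the following are equivalent: (1) for every n ∈ ℕ, all points x₁,…,xₙ ∈ ℝ and all scalars c₁,…,cₙ ∈ ℂ, the sum ∑ᵢ∑ⱼ cᵢ·conj(cⱼ)·f(xᵢ − xⱼ) is a nonnegative real number; (2) for every continuous compactly supported function φ : ℝ → ℂ, the double integral ∫ℝ∫ℝ φ(x)·conj(φ(y))·f(x − y) dx dy is a nonnegative real number. -/
open MeasureTheory ComplexOrder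

namespace StmtAux

open Filter Set

noncomputable def tent (ε t : ℝ) : ℝ := ε⁻¹ * ε⁻¹ * max (ε - |t|) 0

lemma tent_nonneg (ε t : ℝ) : 0 ≤ tent ε t := by
  unfold tent
  rcases le_or_gt ε 0 with h | h
  · rw [max_eq_right (by have := abs_nonneg t; linarith)]; simp
  · positivity

lemma tent_continuous (ε : ℝ) : Continuous (tent ε) := by
  unfold tent; fun_prop

lemma tent_eq_zero {ε t : ℝ} (h : ε ≤ |t|) : tent ε t = 0 := by
  unfold tent
  rw [max_eq_right (by linarith), mul_zero]

lemma tent_hcs (ε : ℝ) : HasCompactSupport (tent ε) := by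
  apply HasCompactSupport.intro (isCompact_Icc (a := -ε) (b := ε))
  intro t ht
  apply tent_eq_zero
  simp only [mem_Icc, not_and_or, not_le] at ht
  rcases ht with h | h
  · rcases abs_cases t with ⟨h1, _⟩ | ⟨h1, _⟩ <;> linarith
  · rcases abs_cases t with ⟨h1, _⟩ | ⟨h1, _⟩ <;> linarith

lemma tent_pos_imp {ε t : ℝ} (h : tent ε t ≠ 0) : |t| < ε := by
  by_contra hc; exact h (tent_eq_zero (not_lt.1 hc))

lemma tent_integrable (ε : ℝ) : Integrable (tent ε) :=
  (tent_continuous ε).integrable_of_hasCompactSupport (tent_hcs ε)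

lemma tent_integral {ε : ℝ} (hε : 0 < ε) : ∫ t, tent ε t = 1 := by
  unfold tent
  rw [MeasureTheory.integral_const_mul]
  have habs : (∫ t : ℝ, max (ε - |t|) 0) = 2 * ∫ t in Ioi (0:ℝ), max (ε - t) 0 :=
    integral_comp_abs (f := fun u => max (ε - u) 0)
  have h1 : (∫ t in Ioi (0:ℝ), max (ε - t) 0) = ε^2/2 := by
    have hset : Ioi (0:ℝ) = Ioc 0 ε ∪ Ioi ε := by
      rw [Ioc_union_Ioi_eq_Ioi hε.le]
    have hint1 : IntegrableOn (fun t => max (ε - t) 0) (Ioc (0:ℝ) ε) :=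
      ((continuous_const.sub continuous_id).max continuous_const).continuousOn.integrableOn_compact
        isCompact_Icc |>.mono_set Ioc_subset_Icc_self
    have hint2 : IntegrableOn (fun t => max (ε - t) 0) (Ioi ε) := by
      apply (integrableOn_congr_fun (g := fun _ => (0:ℝ)) ?_ measurableSet_Ioi).2
        (integrableOn_zero)
      intro t ht; exact max_eq_right (by simp at ht; linarith)
    rw [hset, setIntegral_union (Ioc_disjoint_Ioi le_rfl) measurableSet_Ioi hint1 hint2]
    have h2 : (∫ t in Ioi ε, max (ε - t) 0) = 0 := by
      rw [setIntegral_congr_fun measurableSet_Ioi (g := fun _ => (0:ℝ))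
        (fun t ht => max_eq_right (by simp at ht; linarith))]
      simp
    have h3 : (∫ t in Ioc (0:ℝ) ε, max (ε - t) 0) = ∫ t in Ioc (0:ℝ) ε, (ε - t) := by
      apply setIntegral_congr_fun measurableSet_Ioc
      intro t ht; exact max_eq_left (by simp at ht; linarith)
    rw [h2, h3, ← intervalIntegral.integral_of_le hε.le, add_zero]
    rw [intervalIntegral.integral_sub intervalIntegrable_const intervalIntegral.intervalIntegrable_id]
    rw [integral_id, intervalIntegral.integral_const]
    simp
    ring
  rw [habs, h1]
  field_simp

noncomputable def bump (ε a t : ℝ) : ℂ := (tent ε (t - a) : ℂ)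

lemma bump_continuous (ε a : ℝ) : Continuous (bump ε a) :=
  Complex.continuous_ofReal.comp ((tent_continuous ε).comp (continuous_id.sub continuous_const))

lemma bump_eq_zero {ε a t : ℝ} (h : ε ≤ |t - a|) : bump ε a t = 0 := by
  simp [bump, tent_eq_zero h]

lemma bump_hcs (ε a : ℝ) : HasCompactSupport (bump ε a) := by
  apply HasCompactSupport.intro (isCompact_Icc (a := a - ε) (b := a + ε))
  intro t ht
  apply bump_eq_zero
  simp only [mem_Icc, not_and_or, not_le] at ht
  rcases ht with h | h <;> rcases abs_cases (t - a) with ⟨h1, _⟩ | ⟨h1, _⟩ <;> linarith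

lemma conj_bump (ε a t : ℝ) : (starRingEnd ℂ) (bump ε a t) = bump ε a t :=
  Complex.conj_ofReal _

lemma norm_bump (ε a t : ℝ) : ‖bump ε a t‖ = tent ε (t - a) := by
  rw [bump, Complex.norm_real, Real.norm_eq_abs, abs_of_nonneg (tent_nonneg _ _)]

lemma bump_integrable (ε a : ℝ) : Integrable (bump ε a) :=
  (bump_continuous ε a).integrable_of_hasCompactSupport (bump_hcs ε a)

lemma bump_integral {ε : ℝ} (hε : 0 < ε) (a : ℝ) : ∫ t, bump ε a t = 1 := by
  unfold bump
  have : (∫ t : ℝ, ((tent ε (t - a) : ℝ) : ℂ)) = ((∫ t : ℝ, tent ε (t - a) : ℝ) : ℂ) :=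
    integral_ofReal
  rw [this, integral_sub_right_eq_self (tent ε) a, tent_integral hε, Complex.ofReal_one]

/-- integrand of the inner convolution is integrable -/
lemma conv_integrable {f ψ : ℝ → ℂ} (hf : Continuous f) (hψ : Continuous ψ)
    (hψc : HasCompactSupport ψ) (x : ℝ) : Integrable fun y => ψ y * f (x - y) :=
  Continuous.integrable_of_hasCompactSupport (by fun_prop)
    (hψc.mul_right)

lemma conv_continuous {f ψ : ℝ → ℂ} (hf : Continuous f) (hψ : Continuous ψ)
    (hψc : HasCompactSupport ψ) : Continuous fun x => ∫ y, ψ y * f (x - y) := by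
  have h : ∀ x, (∫ y, ψ y * f (x - y)) = ∫ y in tsupport ψ, ψ y * f (x - y) := fun x =>
    (setIntegral_eq_integral_of_forall_compl_eq_zero fun y hy => by
      rw [image_eq_zero_of_notMem_tsupport hy, zero_mul]).symm
  simp_rw [h]
  exact continuous_parametric_integral_of_continuous (by fun_prop) hψc

lemma tentshift_integrable (ε b : ℝ) : Integrable fun y => tent ε (y - b) := by
  have h := (bump_integrable ε b).norm
  simpa only [norm_bump] using h

lemma tentshift_integral {ε : ℝ} (hε : 0 < ε) (b : ℝ) : ∫ y, tent ε (y - b) = 1 := by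
  rw [integral_sub_right_eq_self (tent ε) b, tent_integral hε]

lemma key_bound {f : ℝ → ℂ} (hf : Continuous f) (a b δ η : ℝ) (hδ : 0 ≤ δ)
    (hη : ∀ u : ℝ, |u - (a - b)| < η → ‖f u - f (a - b)‖ ≤ δ)
    {ε : ℝ} (hε : 0 < ε) (h2 : 2 * ε ≤ η) :
    ‖(∫ x, ∫ y, bump ε a x * bump ε b y * f (x - y)) - f (a - b)‖ ≤ δ := by
  set J : ℝ → ℂ := fun x => ∫ y, bump ε b y * f (x - y) with hJdef
  have hJ : ∀ x, (∫ y, bump ε a x * bump ε b y * f (x - y)) = bump ε a x * J x := by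
    intro x
    simp_rw [mul_assoc]
    exact integral_const_mul _ _
  have hJcont : Continuous J := conv_continuous hf (bump_continuous ε b) (bump_hcs ε b)
  -- inner bound
  have hinner : ∀ x : ℝ, tent ε (x - a) ≠ 0 → ‖J x - f (a - b)‖ ≤ δ := by
    intro x hx
    have hxa : |x - a| < ε := tent_pos_imp hx
    have h1 : J x - f (a - b) = ∫ y, bump ε b y * (f (x - y) - f (a - b)) := by
      simp_rw [mul_sub]
      rw [integral_sub (conv_integrable hf (bump_continuous ε b) (bump_hcs ε b) x)
        ((bump_integrable ε b).mul_const _), integral_mul_const, bump_integral hε, one_mul]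
    rw [h1]
    have hgint : Integrable fun y => tent ε (y - b) * δ := (tentshift_integrable ε b).mul_const δ
    have hb : ‖∫ y, bump ε b y * (f (x - y) - f (a - b))‖ ≤ ∫ y, tent ε (y - b) * δ := by
      apply norm_integral_le_of_norm_le hgint
      filter_upwards with y
      rw [norm_mul, norm_bump]
      rcases eq_or_ne (tent ε (y - b)) 0 with h0 | h0
      · rw [h0, zero_mul, zero_mul]
      · apply mul_le_mul_of_nonneg_left _ (tent_nonneg _ _)
        apply hη
        have hyb : |y - b| < ε := tent_pos_imp h0
        have : x - y - (a - b) = (x - a) - (y - b) := by ring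
        rw [this]
        calc |(x - a) - (y - b)| ≤ |x - a| + |y - b| := abs_sub _ _
          _ < 2 * ε := by linarith
          _ ≤ η := h2
    calc ‖∫ y, bump ε b y * (f (x - y) - f (a - b))‖ ≤ ∫ y, tent ε (y - b) * δ := hb
      _ = δ := by rw [integral_mul_const, tentshift_integral hε, one_mul]
  -- outer
  have hT : (∫ x, ∫ y, bump ε a x * bump ε b y * f (x - y)) - f (a - b)
      = ∫ x, bump ε a x * (J x - f (a - b)) := by
    simp_rw [hJ, mul_sub]
    rw [integral_sub, integral_mul_const, bump_integral hε, one_mul]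
    · exact Continuous.integrable_of_hasCompactSupport ((bump_continuous ε a).mul hJcont)
        ((bump_hcs ε a).mul_right)
    · exact (bump_integrable ε a).mul_const _
  rw [hT]
  have hgint : Integrable fun x => tent ε (x - a) * δ := (tentshift_integrable ε a).mul_const δ
  have hb : ‖∫ x, bump ε a x * (J x - f (a - b))‖ ≤ ∫ x, tent ε (x - a) * δ := by
    apply norm_integral_le_of_norm_le hgint
    filter_upwards with x
    rw [norm_mul, norm_bump]
    rcases eq_or_ne (tent ε (x - a)) 0 with h0 | h0
    · rw [h0, zero_mul, zero_mul]
    · exact mul_le_mul_of_nonneg_left (hinner x h0) (tent_nonneg _ _)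
  calc ‖∫ x, bump ε a x * (J x - f (a - b))‖ ≤ ∫ x, tent ε (x - a) * δ := hb
    _ = δ := by rw [integral_mul_const, tentshift_integral hε, one_mul]

lemma key_limit {f : ℝ → ℂ} (hf : Continuous f) (a b : ℝ) :
    Tendsto (fun n : ℕ => ∫ x, ∫ y,
        bump (1 / (n + 1)) a x * bump (1 / (n + 1)) b y * f (x - y)) atTop
      (nhds (f (a - b))) := by
  rw [Metric.tendsto_atTop]
  intro δ hδ
  have hc : ContinuousAt f (a - b) := hf.continuousAt
  rw [Metric.continuousAt_iff] at hc
  obtain ⟨η, hη, hball⟩ := hc (δ / 2) (by linarith)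
  obtain ⟨N, hN⟩ := exists_nat_gt (2 / η)
  refine ⟨N, fun n hn => ?_⟩
  have hεpos : (0 : ℝ) < 1 / (n + 1) := by positivity
  have h2 : 2 * (1 / ((n : ℝ) + 1)) ≤ η := by
    have hn1 : (0:ℝ) < (n:ℝ) + 1 := by positivity
    have hnN : (N : ℝ) ≤ n := Nat.cast_le.2 hn
    have h3 : 2 / η < (n : ℝ) + 1 := by linarith
    rw [div_lt_iff₀ hη] at h3
    rw [mul_one_div, div_le_iff₀ hn1]
    nlinarith
  have := key_bound hf a b (δ / 2) η (by linarith)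
    (fun u hu => le_of_lt (by
      have := hball (x := u) (by rw [Real.dist_eq]; exact hu)
      rwa [Complex.dist_eq] at this))
    hεpos h2
  rw [dist_eq_norm]
  calc ‖_ - f (a - b)‖ ≤ δ / 2 := this
    _ < δ := by linarith

lemma hcs_sum {ι : Type*} (s : Finset ι) (g : ι → ℝ → ℂ)
    (h : ∀ i ∈ s, HasCompactSupport (g i)) :
    HasCompactSupport fun X => ∑ i ∈ s, g i X := by
  classical
  induction s using Finset.cons_induction with
  | empty =>
    simp only [Finset.sum_empty]
    exact HasCompactSupport.intro isCompact_empty (fun x _ => rfl)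
  | cons a s ha ih =>
    simp only [Finset.sum_cons]
    exact (h a (Finset.mem_cons_self a s)).add
      (ih fun i hi => h i (Finset.mem_cons_of_mem hi))

lemma expand {f : ℝ → ℂ} (hf : Continuous f) {n : ℕ} (x : Fin n → ℝ) (c : Fin n → ℂ)
    (ε : ℝ) :
    (∫ X, ∫ Y, (∑ i, c i * bump ε (x i) X) *
        (starRingEnd ℂ) (∑ j, c j * bump ε (x j) Y) * f (X - Y))
    = ∑ i, ∑ j, c i * (starRingEnd ℂ) (c j) *
        ∫ X, ∫ Y, bump ε (x i) X * bump ε (x j) Y * f (X - Y) := by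
  classical
  set J : Fin n → ℝ → ℂ := fun j X => ∫ Y, bump ε (x j) Y * f (X - Y) with hJdef
  have hJint : ∀ (j : Fin n) (X : ℝ), Integrable fun Y => bump ε (x j) Y * f (X - Y) :=
    fun j X => conv_integrable hf (bump_continuous _ _) (bump_hcs _ _) X
  have hJcont : ∀ j : Fin n, Continuous (J j) :=
    fun j => conv_continuous hf (bump_continuous _ _) (bump_hcs _ _)
  set S : ℝ → ℂ := fun X => ∑ i, c i * bump ε (x i) X with hSdef
  have hScont : Continuous S := by
    apply continuous_finset_sum
    exact fun i _ => continuous_const.mul (bump_continuous ε (x i))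
  have hShcs : HasCompactSupport S :=
    hcs_sum _ _ fun i _ => (bump_hcs ε (x i)).mul_left
  have hinner : ∀ X : ℝ,
      (∫ Y, S X * (starRingEnd ℂ) (∑ j, c j * bump ε (x j) Y) * f (X - Y))
      = ∑ j, S X * (starRingEnd ℂ) (c j) * J j X := by
    intro X
    have hpt : ∀ Y, S X * (starRingEnd ℂ) (∑ j, c j * bump ε (x j) Y) * f (X - Y)
        = ∑ j, S X * (starRingEnd ℂ) (c j) * (bump ε (x j) Y * f (X - Y)) := by
      intro Y
      rw [map_sum, Finset.mul_sum, Finset.sum_mul]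
      refine Finset.sum_congr rfl fun j _ => ?_
      rw [map_mul, conj_bump]; ring
    simp_rw [hpt]
    rw [integral_finset_sum _ fun j _ => (hJint j X).const_mul _]
    exact Finset.sum_congr rfl fun j _ => integral_const_mul _ _
  calc (∫ X, ∫ Y, S X * (starRingEnd ℂ) (∑ j, c j * bump ε (x j) Y) * f (X - Y))
      = ∫ X, ∑ j, S X * (starRingEnd ℂ) (c j) * J j X := by simp_rw [hinner]
    _ = ∑ j, ∫ X, S X * (starRingEnd ℂ) (c j) * J j X := by
        refine integral_finset_sum _ fun j _ => ?_
        apply Continuous.integrable_of_hasCompactSupport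
        · exact (hScont.mul continuous_const).mul (hJcont j)
        · exact (hShcs.mul_right).mul_right
    _ = ∑ j, ∑ i, ∫ X, c i * bump ε (x i) X * (starRingEnd ℂ) (c j) * J j X := by
        refine Finset.sum_congr rfl fun j _ => ?_
        have hpt : ∀ X, S X * (starRingEnd ℂ) (c j) * J j X
            = ∑ i, c i * bump ε (x i) X * (starRingEnd ℂ) (c j) * J j X := by
          intro X
          rw [hSdef]
          simp only
          rw [Finset.sum_mul, Finset.sum_mul]
        simp_rw [hpt]
        refine integral_finset_sum _ fun i _ => ?_
        apply Continuous.integrable_of_hasCompactSupport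
        · exact ((continuous_const.mul (bump_continuous ε (x i))).mul continuous_const).mul (hJcont j)
        · exact (((bump_hcs ε (x i)).mul_left).mul_right).mul_right
    _ = ∑ i, ∑ j, c i * (starRingEnd ℂ) (c j) *
          ∫ X, ∫ Y, bump ε (x i) X * bump ε (x j) Y * f (X - Y) := by
        rw [Finset.sum_comm]
        refine Finset.sum_congr rfl fun i _ => Finset.sum_congr rfl fun j _ => ?_
        have h1 : ∀ X, (∫ Y, bump ε (x i) X * bump ε (x j) Y * f (X - Y))
            = bump ε (x i) X * J j X := by
          intro X
          simp_rw [mul_assoc]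
          exact integral_const_mul _ _
        simp_rw [h1]
        rw [← integral_const_mul]
        have hpt : ∀ X, c i * bump ε (x i) X * (starRingEnd ℂ) (c j) * J j X
            = c i * (starRingEnd ℂ) (c j) * (bump ε (x i) X * J j X) := fun X => by ring
        simp_rw [hpt]

lemma nonneg_lim {w : ℕ → ℂ} {z : ℂ} (hw : ∀ m, 0 ≤ w m)
    (h : Tendsto w atTop (nhds z)) : 0 ≤ z := by
  rw [Complex.nonneg_iff]
  have hre : Tendsto (fun m => (w m).re) atTop (nhds z.re) :=
    (Complex.continuous_re.tendsto z).comp h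
  have him : Tendsto (fun m => (w m).im) atTop (nhds z.im) :=
    (Complex.continuous_im.tendsto z).comp h
  constructor
  · exact ge_of_tendsto hre (Eventually.of_forall fun m => (Complex.nonneg_iff.1 (hw m)).1)
  · have h0 : Tendsto (fun m => (w m).im) atTop (nhds 0) := by
      have : (fun m => (w m).im) = fun _ => (0 : ℝ) := by
        funext m; exact ((Complex.nonneg_iff.1 (hw m)).2).symm
      rw [this]; exact tendsto_const_nhds
    exact tendsto_nhds_unique h0 him


end StmtAux

open StmtAux Filter Set in
/-- A continuous function `f : ℝ → ℂ` is positive definite (all finite quadratic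
sums `∑ᵢ∑ⱼ cᵢ conj(cⱼ) f(xᵢ - xⱼ)` are nonnegative reals) if and only if all double
integrals `∫∫ φ(x) conj(φ(y)) f(x - y)` over continuous compactly supported `φ`
are nonnegative reals. -/
theorem stmt_0 (f : ℝ → ℂ) (hf : Continuous f) :
    (∀ (n : ℕ) (x : Fin n → ℝ) (c : Fin n → ℂ),
      0 ≤ ∑ i, ∑ j, c i * (starRingEnd ℂ) (c j) * f (x i - x j)) ↔
    (∀ φ : ℝ → ℂ, Continuous φ → HasCompactSupport φ →
      0 ≤ ∫ x : ℝ, ∫ y : ℝ, φ x * (starRingEnd ℂ) (φ y) * f (x - y)) := by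
  constructor
  · intro hpd φ hφ hφc
    classical
    set ψ : ℝ → ℂ := fun y => (starRingEnd ℂ) (φ y) with hψdef
    have hψ : Continuous ψ := Complex.continuous_conj.comp hφ
    have hψc : HasCompactSupport ψ := hφc.comp_left (map_zero _)
    set g : ℝ → ℝ → ℂ := fun X Y => φ X * ψ Y * f (X - Y) with hgdef
    -- support radius
    obtain ⟨r, hr⟩ := hφc.isBounded.subset_closedBall 0
    set R : ℝ := |r| + 1 with hRdef
    have hR : 0 < R := by positivity
    have hvan : ∀ t : ℝ, t ∉ Ioc (-R) R → φ t = 0 := by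
      intro t ht
      apply image_eq_zero_of_notMem_tsupport
      intro hts
      have := hr hts
      rw [Real.closedBall_eq_Icc] at this
      simp only [mem_Icc, zero_sub, zero_add] at this
      simp only [mem_Ioc, not_and_or, not_lt, not_le] at ht
      have h1 : |r| ≤ R := by rw [hRdef]; linarith
      rcases ht with h | h
      · have : -|r| ≤ t := le_trans (neg_le_neg (le_abs_self r)) this.1
        rw [hRdef] at h; linarith [neg_le_neg h1]
      · have : t ≤ |r| := le_trans this.2 (le_abs_self r)
        rw [hRdef] at h; linarith
    have hψvan : ∀ t : ℝ, t ∉ Ioc (-R) R → ψ t = 0 := by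
      intro t ht; rw [hψdef]; simp only; rw [hvan t ht, map_zero]
    -- the outer integrand
    set K : ℝ → ℂ := fun x => ∫ y, ψ y * f (x - y) with hKdef
    have hKcont : Continuous K := conv_continuous hf hψ hψc
    set h : ℝ → ℂ := fun x => φ x * K x with hhdef
    have hhcont : Continuous h := hφ.mul hKcont
    have hI1 : (∫ x : ℝ, ∫ y : ℝ, φ x * ψ y * f (x - y)) = ∫ x : ℝ, h x := by
      refine integral_congr_ae (Eventually.of_forall fun x => ?_)
      rw [hhdef]; simp only
      rw [hKdef]; simp only
      simp_rw [mul_assoc]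
      exact integral_const_mul _ _
    -- g continuous uncurried, compact support, uniformly continuous
    have hGcont : Continuous (Function.uncurry g) := by
      rw [hgdef]; unfold Function.uncurry; fun_prop
    have hGhcs : HasCompactSupport (Function.uncurry g) := by
      apply HasCompactSupport.intro (hφc.prod hψc)
      intro p hp
      rw [mem_prod, not_and_or] at hp
      rcases hp with hp | hp
      · show φ p.1 * ψ p.2 * f (p.1 - p.2) = 0
        rw [image_eq_zero_of_notMem_tsupport hp, zero_mul, zero_mul]
      · show φ p.1 * ψ p.2 * f (p.1 - p.2) = 0
        rw [image_eq_zero_of_notMem_tsupport hp, mul_zero, zero_mul]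
    have hGuc : UniformContinuous (Function.uncurry g) :=
      hGhcs.uniformContinuous_of_continuous hGcont
    rw [Metric.uniformContinuous_iff] at hGuc
    have hgycont : ∀ x, Continuous (g x) := fun x => by rw [hgdef]; fun_prop
    -- nodes
    set aa : ℕ → ℕ → ℝ := fun N k => -R + k * (2 * R / N) with haadef
    -- Riemann sums
    set S : ℕ → ℂ := fun N => ∑ i ∈ Finset.range N, ∑ j ∈ Finset.range N,
      (((2 * R / N : ℝ) : ℂ) * φ (aa N i)) * (starRingEnd ℂ) (((2 * R / N : ℝ) : ℂ) * φ (aa N j)) *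
        f (aa N i - aa N j) with hSdef
    have hS_nonneg : ∀ N, 0 ≤ S N := by
      intro N
      have h0 := hpd N (fun i : Fin N => aa N i) (fun i => ((2 * R / N : ℝ) : ℂ) * φ (aa N i))
      rw [hSdef]
      simp only
      have hconv : (∑ i : Fin N, ∑ j : Fin N,
          (((2 * R / N : ℝ) : ℂ) * φ (aa N i)) * (starRingEnd ℂ)
            (((2 * R / N : ℝ) : ℂ) * φ (aa N j)) * f (aa N i - aa N j))
          = ∑ i ∈ Finset.range N, ∑ j ∈ Finset.range N,
          (((2 * R / N : ℝ) : ℂ) * φ (aa N i)) * (starRingEnd ℂ)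
            (((2 * R / N : ℝ) : ℂ) * φ (aa N j)) * f (aa N i - aa N j) := by
        rw [← Fin.sum_univ_eq_sum_range]
        refine Finset.sum_congr rfl fun i _ => ?_
        rw [← Fin.sum_univ_eq_sum_range]
      rw [← hconv]
      exact h0
    -- convergence of Riemann sums to the double integral
    set I : ℂ := ∫ x : ℝ, ∫ y : ℝ, φ x * ψ y * f (x - y) with hIdef
    have hIeq : I = ∫ x in (-R : ℝ)..R, h x := by
      rw [hI1, intervalIntegral.integral_of_le (by linarith : (-R:ℝ) ≤ R)]
      exact (setIntegral_eq_integral_of_forall_compl_eq_zero fun x hx => by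
        rw [hhdef]; simp only; rw [hvan x hx, zero_mul]).symm
    have htendsto : Tendsto S atTop (nhds I) := by
      rw [Metric.tendsto_atTop]
      intro δ hδ
      set δ' : ℝ := δ / (4 * R * R + 1) with hδ'def
      have hδ'pos : 0 < δ' := by rw [hδ'def]; positivity
      obtain ⟨η, hηpos, hη⟩ := hGuc δ' hδ'pos
      obtain ⟨M, hM⟩ := exists_nat_gt (2 * R / η)
      refine ⟨max M 1, fun N hN => ?_⟩
      have hN1 : 1 ≤ N := le_trans (le_max_right M 1) hN
      have hNM : M ≤ N := le_trans (le_max_left M 1) hN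
      have hNpos : (0 : ℝ) < N := by exact_mod_cast hN1
      set Δ : ℝ := 2 * R / N with hΔdef
      have hΔpos : 0 < Δ := by rw [hΔdef]; positivity
      have hΔη : Δ < η := by
        rw [hΔdef, div_lt_iff₀ hNpos]
        have : 2 * R / η < N := lt_of_lt_of_le hM (by exact_mod_cast hNM)
        rw [div_lt_iff₀ hηpos] at this
        nlinarith
      have haainc : ∀ k : ℕ, aa N (k + 1) - aa N k = Δ := by
        intro k
        rw [haadef, hΔdef]
        simp only
        push_cast
        ring
      have haale : ∀ k : ℕ, aa N k ≤ aa N (k + 1) := fun k => by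
        have := haainc k; linarith
      have haa0 : aa N 0 = -R := by rw [haadef]; simp
      have haaN : aa N N = R := by
        rw [haadef]
        simp only
        field_simp
        ring
      -- split the outer integral
      have hsplit : (∫ x in (-R : ℝ)..R, h x)
          = ∑ i ∈ Finset.range N, ∫ x in aa N i..aa N (i + 1), h x := by
        rw [intervalIntegral.sum_integral_adjacent_intervals
          (fun k _ => hhcont.intervalIntegrable _ _), haa0, haaN]
      -- inner splitting
      set G : ℕ → ℝ → ℂ := fun j x => ∫ y in aa N j..aa N (j + 1), g x y with hGdef
      have hGcontj : ∀ j, Continuous (G j) := fun j =>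
        intervalIntegral.continuous_parametric_intervalIntegral_of_continuous' hGcont _ _
      have hinner_split : ∀ x : ℝ, h x = ∑ j ∈ Finset.range N, G j x := by
        intro x
        have h1 : h x = ∫ y, g x y := by
          rw [hhdef, hKdef, hgdef]
          simp only
          simp_rw [mul_assoc]
          rw [integral_const_mul]
        have h2 : (∫ y, g x y) = ∫ y in (-R : ℝ)..R, g x y := by
          rw [intervalIntegral.integral_of_le (by linarith : (-R:ℝ) ≤ R)]
          exact (setIntegral_eq_integral_of_forall_compl_eq_zero fun y hy => by
            rw [hgdef]; simp only; rw [hψvan y hy, mul_zero, zero_mul]).symm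
        rw [h1, h2, hGdef]
        rw [intervalIntegral.sum_integral_adjacent_intervals
          (fun k _ => (hgycont x).intervalIntegrable _ _), haa0, haaN]
      have hIsum : I = ∑ i ∈ Finset.range N, ∑ j ∈ Finset.range N,
          ∫ x in aa N i..aa N (i + 1), G j x := by
        rw [hIeq, hsplit]
        refine Finset.sum_congr rfl fun i _ => ?_
        rw [intervalIntegral.integral_congr (fun x _ => hinner_split x)]
        exact intervalIntegral.integral_finset_sum
          (fun j _ => (hGcontj j).intervalIntegrable _ _)
      -- rewrite S N as cell sums
      have hScell : S N = ∑ i ∈ Finset.range N, ∑ j ∈ Finset.range N,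
          Δ • Δ • g (aa N i) (aa N j) := by
        rw [hSdef]
        simp only
        refine Finset.sum_congr rfl fun i _ => Finset.sum_congr rfl fun j _ => ?_
        rw [map_mul, Complex.conj_ofReal, hgdef, hψdef]
        simp only
        rw [Complex.real_smul, Complex.real_smul, ← hΔdef]
        ring
      -- cell bound
      have hcell : ∀ i ∈ Finset.range N, ∀ j ∈ Finset.range N,
          ‖(∫ x in aa N i..aa N (i + 1), G j x) - Δ • Δ • g (aa N i) (aa N j)‖
            ≤ δ' * Δ * Δ := by
        intro i _ j _
        have hmemx : ∀ x ∈ Set.uIoc (aa N i) (aa N (i + 1)), dist x (aa N i) ≤ Δ := by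
          intro x hx
          rw [uIoc_of_le (haale i)] at hx
          rw [Real.dist_eq, abs_of_pos (by linarith [hx.1])]
          have := haainc i
          linarith [hx.2]
        have hmemy : ∀ y ∈ Set.uIoc (aa N j) (aa N (j + 1)), dist y (aa N j) ≤ Δ := by
          intro y hy
          rw [uIoc_of_le (haale j)] at hy
          rw [Real.dist_eq, abs_of_pos (by linarith [hy.1])]
          have := haainc j
          linarith [hy.2]
        have hptbound : ∀ x ∈ Set.uIoc (aa N i) (aa N (i + 1)), ∀ y ∈ Set.uIoc (aa N j) (aa N (j + 1)),
            ‖g x y - g (aa N i) (aa N j)‖ ≤ δ' := by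
          intro x hx y hy
          have hd : dist ((x, y) : ℝ × ℝ) ((aa N i, aa N j) : ℝ × ℝ) < η := by
            rw [Prod.dist_eq]
            exact lt_of_le_of_lt (max_le (hmemx x hx) (hmemy y hy)) hΔη
          have := hη hd
          rw [dist_eq_norm] at this
          exact le_of_lt this
        -- inner cell bound
        have hinnerb : ∀ x ∈ Set.uIoc (aa N i) (aa N (i + 1)),
            ‖G j x - Δ • g (aa N i) (aa N j)‖ ≤ δ' * Δ := by
          intro x hx
          have hGsub : G j x - Δ • g (aa N i) (aa N j)
              = ∫ y in aa N j..aa N (j + 1), (g x y - g (aa N i) (aa N j)) := by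
            rw [intervalIntegral.integral_sub ((hgycont x).intervalIntegrable _ _)
              intervalIntegrable_const, intervalIntegral.integral_const, haainc, hGdef]
          rw [hGsub]
          have := intervalIntegral.norm_integral_le_of_norm_le_const
            (C := δ') (fun y hy => hptbound x hx y hy)
          rw [show |aa N (j+1) - aa N j| = Δ by rw [haainc]; exact abs_of_pos hΔpos] at this
          exact this
        have hOsub : (∫ x in aa N i..aa N (i + 1), G j x) - Δ • Δ • g (aa N i) (aa N j)
            = ∫ x in aa N i..aa N (i + 1), (G j x - Δ • g (aa N i) (aa N j)) := by
          rw [intervalIntegral.integral_sub ((hGcontj j).intervalIntegrable _ _)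
            intervalIntegrable_const, intervalIntegral.integral_const, haainc]
        rw [hOsub]
        have := intervalIntegral.norm_integral_le_of_norm_le_const
          (C := δ' * Δ) (fun x hx => hinnerb x hx)
        rw [show |aa N (i+1) - aa N i| = Δ by rw [haainc]; exact abs_of_pos hΔpos] at this
        exact this
      -- total bound
      have htotal : dist (S N) I ≤ δ' * (4 * R * R) := by
        rw [dist_eq_norm, hScell, hIsum, ← Finset.sum_sub_distrib]
        have h1 : ‖∑ i ∈ Finset.range N, (∑ j ∈ Finset.range N, Δ • Δ • g (aa N i) (aa N j)
            - ∑ j ∈ Finset.range N, ∫ x in aa N i..aa N (i + 1), G j x)‖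
            ≤ ∑ i ∈ Finset.range N, ∑ j ∈ Finset.range N, (δ' * Δ * Δ) := by
          refine le_trans (norm_sum_le _ _) (Finset.sum_le_sum fun i hi => ?_)
          rw [← Finset.sum_sub_distrib]
          refine le_trans (norm_sum_le _ _) (Finset.sum_le_sum fun j hj => ?_)
          rw [norm_sub_rev]
          exact hcell i hi j hj
        refine le_trans h1 ?_
        rw [Finset.sum_const, Finset.sum_const, Finset.card_range, nsmul_eq_mul, nsmul_eq_mul]
        have hNΔ : (N : ℝ) * Δ = 2 * R := by
          rw [hΔdef]
          field_simp
        have heq : (N:ℝ) * ((N:ℝ) * (δ' * Δ * Δ)) = δ' * (((N:ℝ) * Δ) * ((N:ℝ) * Δ)) := by ring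
        rw [heq, hNΔ]
        apply le_of_eq
        ring
      refine lt_of_le_of_lt htotal ?_
      rw [hδ'def]
      rw [div_mul_eq_mul_div, div_lt_iff₀ (by positivity : (0:ℝ) < 4 * R * R + 1)]
      nlinarith
    exact nonneg_lim hS_nonneg htendsto
  · intro h n x c
    set w : ℕ → ℂ := fun m => ∑ i, ∑ j, c i * (starRingEnd ℂ) (c j) *
      ∫ X, ∫ Y, bump (1 / (m + 1)) (x i) X * bump (1 / (m + 1)) (x j) Y * f (X - Y) with hw
    have hwnonneg : ∀ m, 0 ≤ w m := by
      intro m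
      rw [hw]
      simp only
      rw [← expand hf x c (1 / (m + 1))]
      exact h _ (continuous_finset_sum _ fun i _ => continuous_const.mul (bump_continuous _ _))
        (hcs_sum _ _ fun i _ => (bump_hcs _ _).mul_left)
    refine nonneg_lim hwnonneg ?_
    apply tendsto_finset_sum
    intro i _
    apply tendsto_finset_sum
    intro j _
    exact (key_limit hf (x i) (x j)).const_mul _
end

section
/- Let f : ℝ → ℂ be a continuous positive definite function. Then there exist a complex Hilbert space H, a strongly continuous one-parameter group of unitary operators (U_t)_{t ∈ ℝ} on H (so U_{s}U_{t} = U_{s+t} for all s, t, each U_t is unitary, and t ↦ U_t w is continuous for every w ∈ H), and a vector w₀ ∈ H such that f(t) = ⟨U_t w₀, w₀⟩_H for all t ∈ ℝ. -/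
open MeasureTheory ComplexOrder

section StoneAux

open Finsupp

noncomputable def pdInner (f : ℝ → ℂ) (g h : ℝ →₀ ℂ) : ℂ :=
  g.sum fun x a => h.sum fun y b => (starRingEnd ℂ) a * b * f (y - x)

theorem pdInner_single (f : ℝ → ℂ) (x y : ℝ) (a b : ℂ) :
    pdInner f (single x a) (single y b) = (starRingEnd ℂ) a * b * f (y - x) := by
  unfold pdInner
  rw [Finsupp.sum_single_index, Finsupp.sum_single_index] <;> simp [Finsupp.sum_single_index]

theorem pdInner_add_left (f : ℝ → ℂ) (g g' h : ℝ →₀ ℂ) :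
    pdInner f (g + g') h = pdInner f g h + pdInner f g' h := by
  unfold pdInner
  rw [Finsupp.sum_add_index] <;> simp [add_mul, Finsupp.sum_add]

theorem pdInner_add_right (f : ℝ → ℂ) (g h h' : ℝ →₀ ℂ) :
    pdInner f g (h + h') = pdInner f g h + pdInner f g h' := by
  unfold pdInner
  rw [← Finsupp.sum_add]
  congr 1; ext x a
  rw [Finsupp.sum_add_index] <;> simp [mul_add, add_mul]

theorem pdInner_smul_left (f : ℝ → ℂ) (g h : ℝ →₀ ℂ) (r : ℂ) :
    pdInner f (r • g) h = (starRingEnd ℂ) r * pdInner f g h := by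
  unfold pdInner
  rw [Finsupp.sum_smul_index', Finsupp.mul_sum]
  · congr 1; ext x a
    rw [Finsupp.mul_sum]
    congr 1; ext y b
    simp [mul_assoc, mul_comm, mul_left_comm]
  · intro i; simp

theorem pdInner_sub_left (f : ℝ → ℂ) (g g' h : ℝ →₀ ℂ) :
    pdInner f (g - g') h = pdInner f g h - pdInner f g' h := by
  have h1 := pdInner_add_left f (g - g') g' h
  rw [sub_add_cancel] at h1
  exact eq_sub_of_add_eq h1.symm

theorem pdInner_sub_right (f : ℝ → ℂ) (g h h' : ℝ →₀ ℂ) :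
    pdInner f g (h - h') = pdInner f g h - pdInner f g h' := by
  have h1 := pdInner_add_right f g (h - h') h'
  rw [sub_add_cancel] at h1
  exact eq_sub_of_add_eq h1.symm

theorem pdInner_conj_symm (f : ℝ → ℂ) (hconj : ∀ t, (starRingEnd ℂ) (f t) = f (-t))
    (g h : ℝ →₀ ℂ) : (starRingEnd ℂ) (pdInner f h g) = pdInner f g h := by
  unfold pdInner
  simp only [Finsupp.sum, map_sum]
  rw [Finset.sum_comm]
  refine Finset.sum_congr rfl fun x hx => Finset.sum_congr rfl fun y hy => ?_
  rw [map_mul, map_mul, RingHomInvPair.comp_apply_eq, hconj]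
  have : -(x - y) = y - x := by ring
  rw [this]
  ring

theorem pdInner_nonneg (f : ℝ → ℂ)
    (hpd : ∀ (n : ℕ) (x : Fin n → ℝ) (c : Fin n → ℂ),
      0 ≤ ∑ i, ∑ j, c i * (starRingEnd ℂ) (c j) * f (x i - x j))
    (g : ℝ →₀ ℂ) : 0 ≤ pdInner f g g := by
  classical
  set s := g.support with hs
  set e : Fin s.card ≃ s := s.equivFin.symm with he
  set A : ℝ → ℝ → ℂ := fun p q => g p * (starRingEnd ℂ) (g q) * f (p - q) with hA
  have key := hpd s.card (fun i => (e i : ℝ)) (fun i => g (e i))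
  have h1 : (∑ i : Fin s.card, ∑ j : Fin s.card, A (e i) (e j))
      = ∑ p : s, ∑ q : s, A p q :=
    Fintype.sum_equiv e _ _ (fun i => Fintype.sum_equiv e _ _ (fun j => rfl))
  have h2 : (∑ p : s, ∑ q : s, A (p : ℝ) (q : ℝ)) = ∑ p ∈ s, ∑ q ∈ s, A p q := by
    rw [Finset.sum_coe_sort s (fun p => ∑ q : s, A p q)]
    exact Finset.sum_congr rfl fun p _ => Finset.sum_coe_sort s (A p)
  have key' : 0 ≤ ∑ p ∈ s, ∑ q ∈ s, A p q := by
    rw [← h2, ← h1]; exact key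
  refine le_of_le_of_eq key' ?_
  rw [Finset.sum_comm]
  unfold pdInner
  simp only [Finsupp.sum]
  refine Finset.sum_congr rfl fun x hx => Finset.sum_congr rfl fun y hy => ?_
  simp only [hA]; ring

theorem pdInner_shift (f : ℝ → ℂ) (t : ℝ) (g h : ℝ →₀ ℂ) :
    pdInner f (equivMapDomain (Equiv.addRight t) g) (equivMapDomain (Equiv.addRight t) h)
      = pdInner f g h := by
  have hinj : Function.Injective (⇑(Equiv.addRight t)) := (Equiv.addRight t).injective
  unfold pdInner
  rw [equivMapDomain_eq_mapDomain, equivMapDomain_eq_mapDomain,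
    Finsupp.sum_mapDomain_index_inj hinj]
  refine Finsupp.sum_congr fun x hx => ?_
  rw [Finsupp.sum_mapDomain_index_inj hinj]
  refine Finsupp.sum_congr fun y hy => ?_
  simp [Equiv.coe_addRight]

theorem pd_conj {f : ℝ → ℂ} (hpd : ∀ (n : ℕ) (x : Fin n → ℝ) (c : Fin n → ℂ),
      0 ≤ ∑ i, ∑ j, c i * (starRingEnd ℂ) (c j) * f (x i - x j)) (t : ℝ) :
    (starRingEnd ℂ) (f t) = f (-t) := by
  have h0 := hpd 1 ![0] ![1]
  have h1 := hpd 2 ![0, t] ![1, 1]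
  have h2 := hpd 2 ![0, t] ![1, Complex.I]
  simp [Fin.sum_univ_two, Fin.sum_univ_one, Complex.nonneg_iff] at h0 h1 h2
  apply Complex.ext <;> simp <;> linarith [h0.2, h1.2, h2.2]

theorem shift_comp (s t : ℝ) (g : ℝ →₀ ℂ) :
    equivMapDomain (Equiv.addRight s) (equivMapDomain (Equiv.addRight t) g)
      = equivMapDomain (Equiv.addRight (t + s)) g := by
  rw [← equivMapDomain_trans]
  congr 1
  ext x
  simp [add_assoc]

end StoneAux

/-- GNS/Stone-type representation: a continuous positive definite function `f : ℝ → ℂ`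
is of the form `f(t) = ⟨U_t w₀, w₀⟩` for a strongly continuous one-parameter unitary
group `(U_t)` on a complex Hilbert space `H` and a vector `w₀ ∈ H`.
(Here `⟨·, ·⟩` is linear in the first argument, so in Mathlib's convention it is
`inner w₀ (U t w₀)`.) -/
theorem stmt_9 (f : ℝ → ℂ) (hf : Continuous f)
    (hpd : ∀ (n : ℕ) (x : Fin n → ℝ) (c : Fin n → ℂ),
      0 ≤ ∑ i, ∑ j, c i * (starRingEnd ℂ) (c j) * f (x i - x j)) :
    ∃ (H : Type) (_ : NormedAddCommGroup H) (_ : InnerProductSpace ℂ H)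
      (_ : CompleteSpace H) (U : ℝ → (H ≃ₗᵢ[ℂ] H)) (w₀ : H),
      (∀ s t : ℝ, ∀ w : H, U s (U t w) = U (s + t) w) ∧
      (∀ w : H, Continuous fun t : ℝ => U t w) ∧
      (∀ t : ℝ, f t = inner ℂ w₀ (U t w₀)) := by
  classical
  have hconj : ∀ t, (starRingEnd ℂ) (f t) = f (-t) := pd_conj hpd
  letI c : PreInnerProductSpace.Core ℂ (ℝ →₀ ℂ) :=
    { inner := pdInner f
      conj_inner_symm := pdInner_conj_symm f hconj
      re_inner_nonneg := fun g => by
        have h := pdInner_nonneg f hpd g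
        rw [Complex.nonneg_iff] at h
        simpa using h.1
      add_left := pdInner_add_left f
      smul_left := fun g h r => pdInner_smul_left f g h r }
  letI : SeminormedAddCommGroup (ℝ →₀ ℂ) :=
    @InnerProductSpace.Core.toSeminormedAddCommGroup ℂ (ℝ →₀ ℂ) _ _ _ c
  letI : NormedSpace ℂ (ℝ →₀ ℂ) :=
    @InnerProductSpace.Core.toNormedSpace ℂ (ℝ →₀ ℂ) _ _ _ c
  letI : InnerProductSpace ℂ (ℝ →₀ ℂ) :=
    { toNormedSpace := inferInstance
      inner := pdInner f
      norm_sq_eq_re_inner := fun x => Real.sq_sqrt (c.re_inner_nonneg x)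
      conj_inner_symm := pdInner_conj_symm f hconj
      add_left := pdInner_add_left f
      smul_left := fun g h r => pdInner_smul_left f g h r }
  have inner_eq : ∀ g h : ℝ →₀ ℂ, (inner ℂ g h : ℂ) = pdInner f g h := fun _ _ => rfl
  have hnormV : ∀ h : ℝ →₀ ℂ, ‖h‖ = Real.sqrt (RCLike.re (pdInner f h h)) := fun _ => rfl
  -- shift operators as linear isometry equivalences
  have hTnorm : ∀ (t : ℝ) (g : ℝ →₀ ℂ),
      ‖(Finsupp.domLCongr (Equiv.addRight t) : (ℝ →₀ ℂ) ≃ₗ[ℂ] (ℝ →₀ ℂ)) g‖ = ‖g‖ := by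
    intro t g
    rw [hnormV, hnormV]
    congr 2
    have h1 : ((Finsupp.domLCongr (Equiv.addRight t) : (ℝ →₀ ℂ) ≃ₗ[ℂ] (ℝ →₀ ℂ)) g)
        = Finsupp.equivMapDomain (Equiv.addRight t) g := rfl
    rw [h1, pdInner_shift]
  let T : ℝ → ((ℝ →₀ ℂ) ≃ₗᵢ[ℂ] (ℝ →₀ ℂ)) := fun t =>
    ⟨Finsupp.domLCongr (Equiv.addRight t), hTnorm t⟩
  have hT_apply : ∀ (t : ℝ) (g : ℝ →₀ ℂ),
      T t g = Finsupp.equivMapDomain (Equiv.addRight t) g := fun _ _ => rfl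
  have hT_comp : ∀ (s t : ℝ) (g : ℝ →₀ ℂ), T s (T t g) = T (t + s) g := by
    intro s t g
    rw [hT_apply, hT_apply, hT_apply, shift_comp]
  have hUC : ∀ t, UniformContinuous (T t) := fun t => (T t).isometry.uniformContinuous
  -- extend to the completion
  set H := UniformSpace.Completion (ℝ →₀ ℂ) with hH
  have hmapcoe : ∀ (t : ℝ) (g : ℝ →₀ ℂ),
      UniformSpace.Completion.map (T t) (↑g : H) = (↑(T t g) : H) := fun t g =>
    UniformSpace.Completion.map_coe (hUC t) g
  have hcomp : ∀ (s t : ℝ) (w : H),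
      UniformSpace.Completion.map (T s) (UniformSpace.Completion.map (T t) w)
        = UniformSpace.Completion.map (T (s + t)) w := by
    intro s t w
    induction w using UniformSpace.Completion.induction_on with
    | hp =>
      exact isClosed_eq (UniformSpace.Completion.continuous_map.comp
        UniformSpace.Completion.continuous_map) UniformSpace.Completion.continuous_map
    | ih g =>
      rw [hmapcoe, hmapcoe, hmapcoe, hT_comp, add_comm t s]
  have hid : ∀ w : H, UniformSpace.Completion.map (T 0) w = w := by
    intro w
    have h0 : ⇑(T 0) = id := by
      funext g
      rw [hT_apply]
      have h1 : Equiv.addRight (0:ℝ) = Equiv.refl ℝ := by ext x; simp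
      rw [h1, Finsupp.equivMapDomain_refl]
      rfl
    rw [h0, UniformSpace.Completion.map_id]
    rfl
  let U : ℝ → (H ≃ₗᵢ[ℂ] H) := fun t =>
    { toFun := UniformSpace.Completion.map (T t)
      invFun := UniformSpace.Completion.map (T (-t))
      map_add' := by
        intro x y
        show UniformSpace.Completion.map (⇑(T t)) (x + y)
          = UniformSpace.Completion.map (⇑(T t)) x + UniformSpace.Completion.map (⇑(T t)) y
        induction x, y using UniformSpace.Completion.induction_on₂ with
        | hp =>
          exact isClosed_eq
            (UniformSpace.Completion.continuous_map.comp continuous_add)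
            (Continuous.add (UniformSpace.Completion.continuous_map.comp continuous_fst)
              (UniformSpace.Completion.continuous_map.comp continuous_snd))
        | ih a b =>
          rw [← UniformSpace.Completion.coe_add, hmapcoe, hmapcoe, hmapcoe, map_add,
            UniformSpace.Completion.coe_add]
      map_smul' := by
        intro r x
        show UniformSpace.Completion.map (⇑(T t)) (r • x)
          = r • UniformSpace.Completion.map (⇑(T t)) x
        induction x using UniformSpace.Completion.induction_on with
        | hp =>
          exact isClosed_eq
            (UniformSpace.Completion.continuous_map.comp (continuous_const_smul r))
            ((continuous_const_smul r).comp UniformSpace.Completion.continuous_map)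
        | ih a =>
          rw [← UniformSpace.Completion.coe_smul, hmapcoe, hmapcoe, _root_.map_smul,
            UniformSpace.Completion.coe_smul]
      left_inv := by
        intro w
        show UniformSpace.Completion.map (T (-t)) (UniformSpace.Completion.map (T t) w) = w
        rw [hcomp, neg_add_cancel, hid]
      right_inv := by
        intro w
        show UniformSpace.Completion.map (T t) (UniformSpace.Completion.map (T (-t)) w) = w
        rw [hcomp, add_neg_cancel, hid]
      norm_map' := by
        intro x
        show ‖UniformSpace.Completion.map (⇑(T t)) x‖ = ‖x‖
        induction x using UniformSpace.Completion.induction_on with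
        | hp =>
          exact isClosed_eq (continuous_norm.comp UniformSpace.Completion.continuous_map)
            continuous_norm
        | ih a =>
          rw [hmapcoe, UniformSpace.Completion.norm_coe, UniformSpace.Completion.norm_coe,
            (T _).norm_map] }
  have hU_apply : ∀ (t : ℝ) (w : H), U t w = UniformSpace.Completion.map (T t) w :=
    fun _ _ => rfl
  have hgroup : ∀ (s t : ℝ) (w : H), U s (U t w) = U (s + t) w := by
    intro s t w
    rw [hU_apply, hU_apply, hU_apply, hcomp]
  -- quantitative continuity at 0 on single elements
  have hsingle_norm : ∀ (a : ℝ) (b : ℂ) (s : ℝ),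
      ‖(T s (Finsupp.single a b) : ℝ →₀ ℂ) - Finsupp.single a b‖
        = Real.sqrt (Complex.normSq b * (2 * (f 0).re - 2 * (f s).re)) := by
    intro a b s
    have hT : T s (Finsupp.single a b) = Finsupp.single (a + s) b := by
      rw [hT_apply, Finsupp.equivMapDomain_single]
      rfl
    rw [hT, hnormV]
    congr 1
    rw [pdInner_sub_left, pdInner_sub_right, pdInner_sub_right,
      pdInner_single, pdInner_single, pdInner_single, pdInner_single]
    have e1 : a + s - (a + s) = 0 := by ring
    have e2 : a - (a + s) = -s := by ring
    have e3 : a + s - a = s := by ring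
    have e4 : a - a = 0 := by ring
    rw [e1, e2, e3, e4, ← hconj s]
    simp only [RCLike.re_to_complex, Complex.sub_re, Complex.add_re, Complex.mul_re,
      Complex.mul_im, Complex.conj_re, Complex.conj_im, Complex.normSq_apply]
    ring
  have hφtendsto : ∀ b : ℂ,
      Filter.Tendsto (fun s : ℝ => Real.sqrt (Complex.normSq b * (2 * (f 0).re - 2 * (f s).re)))
        (nhds 0) (nhds 0) := by
    intro b
    have hcont : Continuous fun s : ℝ =>
        Real.sqrt (Complex.normSq b * (2 * (f 0).re - 2 * (f s).re)) := by
      apply Real.continuous_sqrt.comp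
      exact continuous_const.mul
        (continuous_const.sub (continuous_const.mul (Complex.continuous_re.comp hf)))
    have h0 : Real.sqrt (Complex.normSq b * (2 * (f 0).re - 2 * (f 0).re)) = 0 := by simp
    simpa [h0] using hcont.tendsto 0
  have hshift0 : ∀ g : ℝ →₀ ℂ,
      Filter.Tendsto (fun s : ℝ => ‖(T s g : ℝ →₀ ℂ) - g‖) (nhds 0) (nhds 0) := by
    intro g
    induction g using Finsupp.induction with
    | zero => simp only [map_zero, sub_zero, norm_zero]; exact tendsto_const_nhds
    | single_add a b g' ha hb ih =>
      refine squeeze_zero (fun s => norm_nonneg _)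
        (g := fun s => ‖(T s (Finsupp.single a b) : ℝ →₀ ℂ) - Finsupp.single a b‖
          + ‖(T s g' : ℝ →₀ ℂ) - g'‖) (fun s => ?_) ?_
      · rw [map_add]
        have h1 : (T s (Finsupp.single a b) : ℝ →₀ ℂ) + T s g' - (Finsupp.single a b + g')
            = ((T s (Finsupp.single a b) : ℝ →₀ ℂ) - Finsupp.single a b) + (T s g' - g') := by
          abel
        rw [h1]
        exact norm_add_le _ _
      · have h2 : Filter.Tendsto
            (fun s : ℝ => ‖(T s (Finsupp.single a b) : ℝ →₀ ℂ) - Finsupp.single a b‖)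
            (nhds 0) (nhds 0) := by
          simp only [hsingle_norm]
          exact hφtendsto b
        simpa using h2.add ih
  -- convergence at 0 on the whole completion
  have hkey : ∀ w : H, Filter.Tendsto (fun s : ℝ => (U s w : H)) (nhds 0) (nhds w) := by
    intro w
    rw [Metric.tendsto_nhds]
    intro ε hε
    obtain ⟨g, hg⟩ := UniformSpace.Completion.denseRange_coe.exists_dist_lt w
      (show (0:ℝ) < ε/3 by linarith)
    have h2 : ∀ᶠ s : ℝ in nhds 0, ‖(T s g : ℝ →₀ ℂ) - g‖ < ε/3 :=
      (hshift0 g).eventually_lt_const (by linarith)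
    filter_upwards [h2] with s hs
    have e1 : dist (U s w) (U s (↑g : H)) = dist w (↑g : H) := (U s).dist_map w _
    have e2 : dist (U s (↑g : H)) (↑g : H) = ‖(T s g : ℝ →₀ ℂ) - g‖ := by
      rw [hU_apply, hmapcoe, dist_eq_norm, ← UniformSpace.Completion.coe_sub,
        UniformSpace.Completion.norm_coe]
    calc dist (U s w) w
        ≤ dist (U s w) (U s (↑g : H)) + dist (U s (↑g : H)) (↑g : H) + dist (↑g : H) w :=
          dist_triangle4 _ _ _ _
      _ < ε := by rw [e1, e2, dist_comm (↑g : H) w]; linarith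
  refine ⟨H, inferInstance, inferInstance, inferInstance, U,
    (↑(Finsupp.single (0:ℝ) (1:ℂ)) : H), hgroup, ?_, ?_⟩
  · intro w
    rw [continuous_iff_continuousAt]
    intro t₀
    have heq : (fun t : ℝ => U t w) = fun t : ℝ => U (t - t₀) (U t₀ w) := by
      funext t
      rw [hgroup, sub_add_cancel]
    show Filter.Tendsto (fun t : ℝ => U t w) (nhds t₀) (nhds ((fun t : ℝ => U t w) t₀))
    simp only
    rw [heq]
    have ht : Filter.Tendsto (fun t : ℝ => t - t₀) (nhds t₀) (nhds 0) := by
      have := (continuous_id.sub (continuous_const (y := t₀))).tendsto t₀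
      simpa [Pi.sub_def] using this
    exact (hkey (U t₀ w)).comp ht
  · intro t
    rw [hU_apply, hmapcoe, UniformSpace.Completion.inner_coe, inner_eq]
    have hT : T t (Finsupp.single (0:ℝ) (1:ℂ)) = Finsupp.single (0 + t) 1 := by
      rw [hT_apply, Finsupp.equivMapDomain_single]
      rfl
    rw [hT, pdInner_single]
    simp
end

section
/- For every Schwartz function φ : ℝ → ℂ, one has ∑_{n ∈ ℤ} |φ̂(n)|² = 2π · ∑_{k ∈ ℤ} (φ ⋆ φ♯)(2πk), where both sums converge. -/
open MeasureTheory

open Real Complex Filter Asymptotics ContinuousMap Set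
open scoped FourierTransform Real

noncomputable section
namespace DiracComb

variable (g : SchwartzMap ℝ ℂ)

def gC : C(ℝ, ℂ) := ⟨g, g.continuous⟩

lemma h_norm (K : TopologicalSpace.Compacts ℝ) :
    Summable fun n : ℤ => ‖((gC g).comp <| ContinuousMap.addRight n).restrict K‖ := by
  apply summable_of_isBigO (Real.summable_abs_int_rpow one_lt_two)
  exact (isBigO_norm_restrict_cocompact (gC g) (by norm_num : (0:ℝ) < 2)
    (g.isBigO_cocompact_rpow (-2)) K).comp_tendsto Int.tendsto_coe_cofinite

/-- the periodization as a continuous map on ℝ -/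
def F0 : C(ℝ, ℂ) := ∑' n : ℤ, (gC g).comp (ContinuousMap.addRight (n • (1:ℝ)))

lemma F0_eq : F0 g = ∑' n : ℤ, (gC g).comp (ContinuousMap.addRight n) := by
  simp only [F0, zsmul_one]

lemma F0_apply (x : ℝ) : F0 g x = ∑' n : ℤ, g (x + n) := by
  rw [F0_eq, ← ContinuousMap.tsum_apply (summable_of_locally_summable_norm (h_norm g))]
  rfl

lemma F0_periodic : Function.Periodic (F0 g) 1 :=
  (gC g).periodic_tsum_comp_add_zsmul 1

end DiracComb
noncomputable section
namespace DiracComb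
open TopologicalSpace
variable (g : SchwartzMap ℝ ℂ)

instance : Fact ((0:ℝ) < 1) := ⟨zero_lt_one⟩

/-- periodization as a function on the circle -/
def FQ : AddCircle (1:ℝ) → ℂ := Function.Periodic.lift (F0_periodic g)

lemma FQ_coe (x : ℝ) : FQ g x = F0 g x := Function.Periodic.lift_coe _ _

lemma FQ_continuous : Continuous (FQ g) :=
  continuous_coinduced_dom.mpr (map_continuous (F0 g))

def FC : C(AddCircle (1:ℝ), ℂ) := ⟨FQ g, FQ_continuous g⟩

lemma fourierCoeff_FQ (m : ℤ) : fourierCoeff (FQ g) m = 𝓕 ⇑(gC g) m :=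
  Real.fourierCoeff_tsum_comp_add (h_norm g) m

lemma parseval :
    ∑' n : ℤ, ‖𝓕 (⇑g : ℝ → ℂ) n‖ ^ 2
      = ∫ t : AddCircle (1:ℝ), ‖FQ g t‖ ^ 2 ∂AddCircle.haarAddCircle := by
  have h1 := tsum_sq_fourierCoeff (toLp (E := ℂ) 2 AddCircle.haarAddCircle ℂ (FC g))
  simp_rw [fourierCoeff_toLp] at h1
  have h2 : ∀ m : ℤ, fourierCoeff (⇑(FC g)) m = 𝓕 (⇑g : ℝ → ℂ) m := fun m =>
    fourierCoeff_FQ g m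
  simp_rw [h2] at h1
  rw [h1]
  refine integral_congr_ae ?_
  filter_upwards [ContinuousMap.coeFn_toLp (p := 2) (𝕜 := ℂ)
    AddCircle.haarAddCircle (FC g)] with t ht
  rw [ht]; rfl
end DiracComb
noncomputable section
namespace DiracComb
open TopologicalSpace
variable (g : SchwartzMap ℝ ℂ)

/-- conjugate of the periodization -/
def pC : C(ℝ, ℂ) := ⟨fun x => (starRingEnd ℂ) (F0 g x), continuous_star.comp (map_continuous (F0 g))⟩

lemma pC_periodic : Function.Periodic (pC g) 1 := fun x => by
  simp only [pC, ContinuousMap.coe_mk, (F0_periodic g) x]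

lemma pC_add_int (x : ℝ) (n : ℤ) : pC g (x + n) = pC g x := by
  simpa using ((pC_periodic g).int_mul n) x

lemma pC_bound (y : ℝ) : ‖pC g y‖ ≤ ‖(F0 g).restrict (Icc (0:ℝ) 1)‖ := by
  have h1 : ‖pC g y‖ = ‖F0 g (Int.fract y)‖ := by
    have h0 : F0 g (y - (⌊y⌋ : ℤ) * 1) = F0 g y := (F0_periodic g).sub_int_mul_eq ⌊y⌋
    have h0' : F0 g (Int.fract y) = F0 g y := by rw [← h0]; congr 1; rw [Int.fract]; ring
    simp only [pC, ContinuousMap.coe_mk, h0']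
    exact RCLike.norm_conj _
  rw [h1]
  exact ((F0 g).restrict (Icc (0:ℝ) 1)).norm_coe_le_norm
    ⟨Int.fract y, ⟨Int.fract_nonneg y, (Int.fract_lt_one y).le⟩⟩

/-- the product `g * conj (periodization g)` -/
def hC : C(ℝ, ℂ) := gC g * pC g

lemma h_norm_h (K : Compacts ℝ) :
    Summable fun n : ℤ => ‖((hC g).comp <| ContinuousMap.addRight n).restrict K‖ := by
  set Cp := ‖(F0 g).restrict (Icc (0:ℝ) 1)‖ with hCp
  apply Summable.of_nonneg_of_le (fun n => norm_nonneg _)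
    (fun n => ?_) ((h_norm g K).mul_right Cp)
  rw [ContinuousMap.norm_le _ (mul_nonneg (norm_nonneg _) (norm_nonneg _))]
  rintro ⟨x, hx⟩
  have h1 : ‖g (x + n)‖ ≤ ‖((gC g).comp <| ContinuousMap.addRight n).restrict (K : Set ℝ)‖ :=
    ((((gC g).comp <| ContinuousMap.addRight n)).restrict (K : Set ℝ)).norm_coe_le_norm
      (⟨x, hx⟩ : (K : Set ℝ))
  have h2 := pC_bound g (x + n)
  calc ‖(((hC g).comp <| ContinuousMap.addRight n).restrict K) ⟨x, hx⟩‖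
      = ‖g (x + n)‖ * ‖pC g (x + n)‖ := by
        simp only [hC, ContinuousMap.restrict_apply, ContinuousMap.mul_apply,
          ContinuousMap.comp_apply, ContinuousMap.coe_addRight, norm_mul]
        rfl
    _ ≤ _ := mul_le_mul h1 h2 (norm_nonneg _) (norm_nonneg _)

lemma hC_lift_coe (x : ℝ) :
    Function.Periodic.lift ((hC g).periodic_tsum_comp_add_zsmul 1) (x : AddCircle (1:ℝ))
      = F0 g x * pC g x := by
  rw [Function.Periodic.lift_coe]
  have hsum : Summable fun n : ℤ => (hC g).comp (ContinuousMap.addRight n) := by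
    exact summable_of_locally_summable_norm (h_norm_h g)
  have : (∑' n : ℤ, (hC g).comp (ContinuousMap.addRight (n • (1:ℝ)))) x
      = ∑' n : ℤ, (hC g) (x + n) := by
    simp_rw [zsmul_one]
    rw [← ContinuousMap.tsum_apply hsum]; rfl
  rw [this]
  have : ∀ n : ℤ, (hC g) (x + n) = g (x + n) * pC g x := fun n => by
    simp only [hC, gC, ContinuousMap.mul_apply, ContinuousMap.coe_mk, pC_add_int]
  simp_rw [this, tsum_mul_right, ← F0_apply]

end DiracComb
noncomputable section
namespace DiracComb
open TopologicalSpace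
variable (g : SchwartzMap ℝ ℂ)

lemma key1 : ∫ t : AddCircle (1:ℝ), ((‖FQ g t‖^2 : ℝ) : ℂ) ∂AddCircle.haarAddCircle
    = ∫ y : ℝ, g y * pC g y := by
  have hfc := Real.fourierCoeff_tsum_comp_add (h_norm_h g) 0
  have hL : ∫ t : AddCircle (1:ℝ), ((‖FQ g t‖^2 : ℝ) : ℂ) ∂AddCircle.haarAddCircle
      = fourierCoeff (Function.Periodic.lift ((hC g).periodic_tsum_comp_add_zsmul 1)) 0 := by
    rw [fourierCoeff]
    refine integral_congr_ae (Filter.Eventually.of_forall fun t => ?_)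
    induction t using QuotientAddGroup.induction_on with
    | H x =>
      dsimp only
      rw [hC_lift_coe g x]
      have h2 : FQ g (x : AddCircle (1:ℝ)) = F0 g x := FQ_coe g x
      have h3 : pC g x = (starRingEnd ℂ) (F0 g x) := rfl
      rw [neg_zero, fourier_zero, one_smul, h2, h3, Complex.mul_conj]
      rw [Complex.normSq_eq_norm_sq]
  have hR : 𝓕 (⇑(hC g)) 0 = ∫ y : ℝ, g y * pC g y := by
    rw [Real.fourier_real_eq_integral_exp_smul]
    refine integral_congr_ae (Filter.Eventually.of_forall fun x => ?_)
    simp [hC, gC, mul_comm]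
  push_cast at hfc
  rw [hL, hfc, hR]

lemma key2 : ((∑' n : ℤ, ‖𝓕 (⇑g : ℝ → ℂ) n‖^2 : ℝ) : ℂ) = ∫ y : ℝ, g y * pC g y := by
  rw [parseval g, ← key1 g]
  exact _root_.integral_ofReal.symm

lemma exists_decay : ∃ C : ℝ, 0 ≤ C ∧ ∀ x : ℝ, ‖g x‖ ≤ C / (1 + x^2) := by
  obtain ⟨C₀, hC₀pos, hC₀⟩ := g.decay 0 0
  obtain ⟨C₂, hC₂pos, hC₂⟩ := g.decay 2 0
  refine ⟨C₀ + C₂, by positivity, fun x => ?_⟩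
  have h1 : (1 + x^2) * ‖g x‖ ≤ C₀ + C₂ := by
    have e0 := hC₀ x
    have e2 := hC₂ x
    rw [pow_zero, one_mul, norm_iteratedFDeriv_zero] at e0
    rw [norm_iteratedFDeriv_zero, Real.norm_eq_abs] at e2
    have hx2 : |x| ^ 2 = x ^ 2 := _root_.sq_abs x
    rw [hx2] at e2
    nlinarith [norm_nonneg (g x)]
  have hpos : (0:ℝ) < 1 + x^2 := by positivity
  rw [le_div_iff₀ hpos]
  linarith [h1]

lemma sumInv : Summable (fun k : ℤ => ((1:ℝ) + (k:ℝ)^2/4)⁻¹) := by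
  apply summable_of_isBigO (Real.summable_abs_int_rpow (one_lt_two))
  rw [Asymptotics.isBigO_iff]
  refine ⟨4, ?_⟩
  have : {k : ℤ | ¬ ‖((1:ℝ) + (k:ℝ)^2/4)⁻¹‖ ≤ 4 * ‖|(k:ℝ)| ^ (-2:ℝ)‖}.Finite := by
    apply Set.Finite.subset (Set.finite_singleton (0:ℤ))
    intro k hk
    simp only [Set.mem_setOf_eq, Set.mem_singleton_iff] at hk ⊢
    by_contra hk0
    apply hk
    have hkabs : (1:ℝ) ≤ |(k:ℝ)| := by
      have : (1:ℤ) ≤ |k| := Int.one_le_abs (by exact_mod_cast hk0)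
      calc (1:ℝ) ≤ (|k| : ℤ) := by exact_mod_cast this
        _ = |(k:ℝ)| := by push_cast; rfl
    have hk2 : (0:ℝ) < (k:ℝ)^2 := by positivity
    have habs2 : |(k:ℝ)| ^ (2:ℝ) = (k:ℝ)^2 := by
      rw [show ((2:ℝ)) = ((2:ℕ):ℝ) by norm_num, Real.rpow_natCast, _root_.sq_abs]
    have hrpow : |(k:ℝ)| ^ (-2:ℝ) = ((k:ℝ)^2)⁻¹ := by
      rw [Real.rpow_neg (abs_nonneg _), habs2]
    simp only [Real.norm_eq_abs, hrpow,
      _root_.abs_of_nonneg (by positivity : (0:ℝ) ≤ ((1:ℝ) + (k:ℝ)^2/4)⁻¹),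
      _root_.abs_of_nonneg (by positivity : (0:ℝ) ≤ ((k:ℝ)^2)⁻¹)]
    have h4 : ((1:ℝ) + (k:ℝ)^2/4)⁻¹ ≤ ((k:ℝ)^2/4)⁻¹ := by
      apply inv_anti₀ (by positivity)
      linarith
    have h5 : ((k:ℝ)^2/4)⁻¹ = 4 * ((k:ℝ)^2)⁻¹ := by
      field_simp
    linarith
  exact this.eventually_cofinite_notMem.mono (fun k hk => by simpa using hk)

end DiracComb
noncomputable section
namespace DiracComb
open TopologicalSpace
variable (g : SchwartzMap ℝ ℂ)

lemma prod_bound {C : ℝ} (hC0 : 0 ≤ C) (hC : ∀ x : ℝ, ‖g x‖ ≤ C / (1 + x^2))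
    (k : ℤ) (y : ℝ) :
    ‖g y * (starRingEnd ℂ) (g (y + k))‖
      ≤ C^2 / (1 + (k:ℝ)^2/4) * ((1 + y^2)⁻¹ + (1 + (y + k)^2)⁻¹) := by
  rw [norm_mul, RCLike.norm_conj]
  have hmax : (k:ℝ)^2/4 ≤ y^2 ∨ (k:ℝ)^2/4 ≤ (y + k)^2 := by
    by_contra hcon
    push_neg at hcon
    obtain ⟨h1, h2⟩ := hcon
    have e1 : |y| < |(k:ℝ)|/2 := by
      rw [← _root_.sq_abs y, ← _root_.sq_abs (k:ℝ)] at h1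
      nlinarith [abs_nonneg y, abs_nonneg (k:ℝ)]
    have e2 : |y + (k:ℝ)| < |(k:ℝ)|/2 := by
      rw [← _root_.sq_abs (y + (k:ℝ)), ← _root_.sq_abs (k:ℝ)] at h2
      nlinarith [abs_nonneg (y + (k:ℝ)), abs_nonneg (k:ℝ)]
    have : |(k:ℝ)| ≤ |y| + |y + (k:ℝ)| := by
      have := abs_sub_abs_le_abs_sub (y + (k:ℝ)) y
      have h3 : |(y + (k:ℝ)) - y| = |(k:ℝ)| := by ring_nf
      calc |(k:ℝ)| = |(y + (k:ℝ)) - y| := by ring_nf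
        _ ≤ |y + (k:ℝ)| + |y| := abs_sub _ _
        _ = |y| + |y + (k:ℝ)| := by ring
    linarith
  have hyp : (0:ℝ) < 1 + y^2 := by positivity
  have hyk : (0:ℝ) < 1 + (y + (k:ℝ))^2 := by positivity
  have hkp : (0:ℝ) < 1 + (k:ℝ)^2/4 := by positivity
  have b1 := hC y
  have b2 := hC (y + k)
  rcases hmax with h | h
  · have e1 : ‖g y‖ ≤ C / (1 + (k:ℝ)^2/4) := by
      refine b1.trans ?_
      apply div_le_div_of_nonneg_left hC0 hkp
      linarith
    calc ‖g y‖ * ‖g (y + (k:ℝ))‖ ≤ (C / (1 + (k:ℝ)^2/4)) * (C / (1 + (y + (k:ℝ))^2)) :=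
          mul_le_mul e1 b2 (norm_nonneg _) (by positivity)
      _ = C^2 / (1 + (k:ℝ)^2/4) * (1 + (y + (k:ℝ))^2)⁻¹ := by
          field_simp
      _ ≤ _ := by
          have : (0:ℝ) ≤ C^2 / (1 + (k:ℝ)^2/4) * (1 + y^2)⁻¹ := by positivity
          nlinarith []
  · have e2 : ‖g (y + (k:ℝ))‖ ≤ C / (1 + (k:ℝ)^2/4) := by
      refine b2.trans ?_
      apply div_le_div_of_nonneg_left hC0 hkp
      linarith
    calc ‖g y‖ * ‖g (y + (k:ℝ))‖ ≤ (C / (1 + y^2)) * (C / (1 + (k:ℝ)^2/4)) :=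
          mul_le_mul b1 e2 (norm_nonneg _) (by positivity)
      _ = C^2 / (1 + (k:ℝ)^2/4) * (1 + y^2)⁻¹ := by
          field_simp
      _ ≤ _ := by
          have : (0:ℝ) ≤ C^2 / (1 + (k:ℝ)^2/4) * (1 + (y + (k:ℝ))^2)⁻¹ := by positivity
          nlinarith []

lemma integrable_prod (k : ℤ) :
    Integrable (fun y : ℝ => g y * (starRingEnd ℂ) (g (y + k))) := by
  have h1 : Integrable (fun y : ℝ => (starRingEnd ℂ) (g (y + (k:ℝ))) * g y) := by
    apply Integrable.bdd_mul (c := Classical.choose (g.decay 0 0)) g.integrable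
    · apply Continuous.aestronglyMeasurable
      exact continuous_star.comp (g.continuous.comp (continuous_id.add continuous_const))
    · obtain ⟨hC₀pos, hC₀⟩ := Classical.choose_spec (g.decay 0 0)
      refine Filter.Eventually.of_forall (fun y => ?_)
      have := hC₀ (y + k)
      rw [pow_zero, one_mul, norm_iteratedFDeriv_zero] at this
      simpa [RCLike.norm_conj] using this
  exact h1.congr (Filter.Eventually.of_forall fun y => mul_comm _ _)

lemma norm_int_summable :
    Summable (fun k : ℤ => ∫ y : ℝ, ‖g y * (starRingEnd ℂ) (g (y + k))‖) := by
  obtain ⟨C, hC0, hC⟩ := exists_decay g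
  have hInt : Integrable (fun y : ℝ => (1 + y^2)⁻¹) := by
    simpa using integrable_inv_one_add_sq
  apply Summable.of_nonneg_of_le
    (fun k => integral_nonneg fun y => norm_nonneg _) (fun k => ?_)
    (Summable.mul_right (2 * Real.pi) (Summable.mul_left (C^2) (sumInv)))
  have hIntk : Integrable (fun y : ℝ => (1 + (y + (k:ℝ))^2)⁻¹) :=
    hInt.comp_add_right (k:ℝ)
  have step : ∫ y : ℝ, ‖g y * (starRingEnd ℂ) (g (y + k))‖
      ≤ ∫ y : ℝ, C^2 / (1 + (k:ℝ)^2/4) * ((1 + y^2)⁻¹ + (1 + (y + (k:ℝ))^2)⁻¹) := by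
    apply integral_mono_of_nonneg (Filter.Eventually.of_forall fun y => norm_nonneg _)
      (((hInt.add hIntk).const_mul _)) (Filter.Eventually.of_forall fun y => prod_bound g hC0 hC k y)
  refine step.trans ?_
  rw [integral_const_mul, integral_add hInt hIntk]
  have i1 : ∫ y : ℝ, (1 + y^2)⁻¹ = Real.pi := by
    simpa using integral_univ_inv_one_add_sq
  have i2 : ∫ y : ℝ, (1 + (y + (k:ℝ))^2)⁻¹ = Real.pi := by
    rw [integral_add_right_eq_self (fun y : ℝ => (1 + y^2)⁻¹) (k:ℝ)]
    exact i1
  rw [i1, i2]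
  have heq : C^2 / (1 + (k:ℝ)^2/4) * (Real.pi + Real.pi)
      = C^2 * ((1:ℝ) + (k:ℝ)^2/4)⁻¹ * (2 * Real.pi) := by
    rw [div_eq_mul_inv]; ring
  exact heq.le

end DiracComb
noncomputable section
namespace DiracComb
open TopologicalSpace
variable (g : SchwartzMap ℝ ℂ)

lemma pC_eq_tsum (y : ℝ) : pC g y = ∑' n : ℤ, (starRingEnd ℂ) (g (y + n)) := by
  have : pC g y = (starRingEnd ℂ) (F0 g y) := rfl
  rw [this, F0_apply]
  exact tsum_star

lemma swap : ∫ y : ℝ, g y * pC g y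
    = ∑' k : ℤ, ∫ y : ℝ, g y * (starRingEnd ℂ) (g (y + k)) := by
  rw [integral_tsum_of_summable_integral_norm (integrable_prod g) (norm_int_summable g)]
  refine integral_congr_ae (Filter.Eventually.of_forall fun y => ?_)
  dsimp only
  rw [pC_eq_tsum g y, tsum_mul_left]

lemma core_eq : ((∑' n : ℤ, ‖𝓕 (⇑g : ℝ → ℂ) n‖^2 : ℝ) : ℂ)
    = ∑' k : ℤ, ∫ y : ℝ, g y * (starRingEnd ℂ) (g (y - k)) := by
  rw [key2 g, swap g]
  rw [← (Equiv.neg ℤ).tsum_eq (fun k : ℤ => ∫ y : ℝ, g y * (starRingEnd ℂ) (g (y - k)))]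
  refine tsum_congr fun k => ?_
  simp [sub_neg_eq_add]

lemma core_summable2 : Summable fun k : ℤ => ∫ y : ℝ, g y * (starRingEnd ℂ) (g (y - k)) := by
  have h1 : Summable (fun k : ℤ => ∫ y : ℝ, ‖g y * (starRingEnd ℂ) (g (y + k))‖) :=
    norm_int_summable g
  have h2 := h1.comp_injective (Equiv.neg ℤ).injective
  apply Summable.of_norm_bounded h2
  intro k
  refine (norm_integral_le_integral_norm _).trans (le_of_eq ?_)
  have hfun : (fun y : ℝ => ‖g y * (starRingEnd ℂ) (g (y - (k:ℝ)))‖)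
      = fun y : ℝ => ‖g y * (starRingEnd ℂ) (g (y + ((-k : ℤ) : ℝ)))‖ := by
    funext y; congr 3; push_cast; ring
  simp only [Function.comp_def, Equiv.neg_apply]
  rw [hfun]

lemma core_summable1 : Summable fun n : ℤ => ‖𝓕 (⇑g : ℝ → ℂ) n‖^2 := by
  obtain ⟨C, hC0, hC⟩ := exists_decay (SchwartzMap.fourierTransformCLM ℝ g)
  have hFg : ∀ x : ℝ, 𝓕 (⇑g : ℝ → ℂ) x = SchwartzMap.fourierTransformCLM ℝ g x := fun x => rfl
  apply Summable.of_nonneg_of_le (fun n => by positivity) (fun n => ?_)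
    (Summable.mul_left (C^2) (sumInv))
  rw [hFg]
  have h1 := hC (n:ℝ)
  have hpos : (0:ℝ) < 1 + (n:ℝ)^2 := by positivity
  have hposk : (0:ℝ) < 1 + (n:ℝ)^2/4 := by positivity
  have key : ‖(SchwartzMap.fourierTransformCLM ℝ g) (n:ℝ)‖^2 ≤ (C / (1 + (n:ℝ)^2))^2 := by
    apply pow_le_pow_left₀ (norm_nonneg _) h1
  refine key.trans ?_
  rw [div_pow]
  have h2 : (1 + (n:ℝ)^2/4) ≤ (1 + (n:ℝ)^2)^2 := by nlinarith [sq_nonneg ((n:ℝ)^2)]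
  calc C^2 / (1 + (n:ℝ)^2)^2 ≤ C^2 / (1 + (n:ℝ)^2/4) := by
        apply div_le_div_of_nonneg_left (by positivity) hposk h2
    _ = C^2 * (1 + (n:ℝ)^2/4)⁻¹ := by rw [div_eq_mul_inv]

end DiracComb
noncomputable section
namespace DiracComb
open TopologicalSpace

/-- scaling by 2π as a continuous linear equivalence -/
def scaleE : ℝ ≃L[ℝ] ℝ :=
  (LinearEquiv.smulOfNeZero ℝ ℝ (2*Real.pi) (by positivity)).toContinuousLinearEquiv

variable (φ : SchwartzMap ℝ ℂ)

/-- φ(2π ·) as a Schwartz map -/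
def gφ : SchwartzMap ℝ ℂ := SchwartzMap.compCLMOfContinuousLinearEquiv ℝ scaleE φ

lemma gφ_apply (x : ℝ) : gφ φ x = φ (2*Real.pi*x) := by
  simp only [gφ, SchwartzMap.compCLMOfContinuousLinearEquiv_apply, Function.comp_apply]
  congr 1

lemma unscale (G : ℝ → ℂ) : ∫ y : ℝ, G y = (2*Real.pi) • ∫ x : ℝ, G (2*Real.pi*x) := by
  rw [MeasureTheory.Measure.integral_comp_mul_left G (2*Real.pi), smul_smul,
    abs_of_pos (by positivity : (0:ℝ) < (2*Real.pi)⁻¹), mul_inv_cancel₀ (by positivity), one_smul]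

lemma fourier_relation (n : ℤ) :
    (∫ x : ℝ, φ x * Complex.exp (Complex.I * (n:ℂ) * (x:ℂ)))
      = (2*Real.pi) • 𝓕 (⇑(gφ φ) : ℝ → ℂ) (-(n:ℝ)) := by
  rw [Real.fourier_real_eq_integral_exp_smul]
  rw [unscale (fun x : ℝ => φ x * Complex.exp (Complex.I * (n:ℂ) * (x:ℂ)))]
  congr 1
  refine integral_congr_ae (Filter.Eventually.of_forall fun x => ?_)
  dsimp only
  rw [← gφ_apply φ x, smul_eq_mul, mul_comm]
  congr 2
  push_cast
  ring

lemma conv_relation (k : ℤ) :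
    (∫ y : ℝ, φ y * (starRingEnd ℂ) (φ (y - 2 * Real.pi * k)))
      = (2*Real.pi) • ∫ u : ℝ, gφ φ u * (starRingEnd ℂ) (gφ φ (u - k)) := by
  rw [unscale (fun y : ℝ => φ y * (starRingEnd ℂ) (φ (y - 2 * Real.pi * k)))]
  congr 1
  refine integral_congr_ae (Filter.Eventually.of_forall fun u => ?_)
  dsimp only
  rw [show 2*Real.pi*u - 2*Real.pi*(k:ℝ) = 2*Real.pi*(u-(k:ℝ)) by ring,
    ← gφ_apply φ u, ← gφ_apply φ (u - (k:ℝ))]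

end DiracComb
end
open DiracComb

/-- The Dirac comb identity (Poisson summation for the pair `∑ δ_n`, `2π ∑ δ_{2πk}`):
for every Schwartz function `φ`,
`∑_{n ∈ ℤ} |φ̂(n)|² = 2π ∑_{k ∈ ℤ} (φ ⋆ φ♯)(2πk)`, both sums being convergent.
Here `φ̂(λ) = ∫ φ(x) e^{iλx} dx` and `(φ ⋆ φ♯)(t) = ∫ φ(y) conj(φ(y - t)) dy`. -/
theorem stmt_11 (φ : SchwartzMap ℝ ℂ) :
    Summable (fun n : ℤ => ‖∫ x : ℝ, φ x * Complex.exp (Complex.I * (n : ℂ) * (x : ℂ))‖ ^ 2) ∧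
    Summable (fun k : ℤ => ∫ y : ℝ, φ y * (starRingEnd ℂ) (φ (y - 2 * Real.pi * k))) ∧
    ((∑' n : ℤ, ‖∫ x : ℝ, φ x * Complex.exp (Complex.I * (n : ℂ) * (x : ℂ))‖ ^ 2 : ℝ) : ℂ)
      = 2 * (Real.pi : ℂ)
          * ∑' k : ℤ, ∫ y : ℝ, φ y * (starRingEnd ℂ) (φ (y - 2 * Real.pi * k)) := by
  set g := gφ φ with hg
  have hA : (fun n : ℤ => ‖∫ x : ℝ, φ x * Complex.exp (Complex.I * (n : ℂ) * (x : ℂ))‖ ^ 2)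
      = fun n : ℤ => (2*Real.pi)^2 * ‖𝓕 (⇑g : ℝ → ℂ) (((-n : ℤ) : ℝ))‖^2 := by
    funext n
    rw [fourier_relation φ n, norm_smul, Real.norm_eq_abs,
      abs_of_pos (by positivity : (0:ℝ) < 2*Real.pi), mul_pow]
    congr 3
    push_cast
    ring
  have hB : (fun k : ℤ => ∫ y : ℝ, φ y * (starRingEnd ℂ) (φ (y - 2 * Real.pi * k)))
      = fun k : ℤ => (2*Real.pi) • ∫ u : ℝ, g u * (starRingEnd ℂ) (g (u - k)) := by
    funext k
    exact conv_relation φ k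
  have S1 : Summable fun n : ℤ => ‖𝓕 (⇑g : ℝ → ℂ) (n:ℝ)‖^2 := core_summable1 g
  have S1' : Summable fun n : ℤ => ‖𝓕 (⇑g : ℝ → ℂ) (((-n : ℤ)):ℝ)‖^2 :=
    S1.comp_injective neg_injective
  have S2 : Summable fun k : ℤ => ∫ u : ℝ, g u * (starRingEnd ℂ) (g (u - k)) :=
    core_summable2 g
  refine ⟨by rw [hA]; exact S1'.mul_left _, by rw [hB]; exact S2.const_smul _, ?_⟩
  have hT : (∑' n : ℤ, ‖∫ x : ℝ, φ x * Complex.exp (Complex.I * (n : ℂ) * (x : ℂ))‖ ^ 2 : ℝ)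
      = (2*Real.pi)^2 * ∑' n : ℤ, ‖𝓕 (⇑g : ℝ → ℂ) (n:ℝ)‖^2 := by
    rw [hA, tsum_mul_left]
    congr 1
    exact (Equiv.neg ℤ).tsum_eq (fun n : ℤ => ‖𝓕 (⇑g : ℝ → ℂ) (n:ℝ)‖^2)
  rw [hT, hB, Summable.tsum_const_smul _ S2, Complex.ofReal_mul, Complex.ofReal_pow,
    core_eq g, Complex.real_smul]
  push_cast
  ring
end
end
end
end
end
end
end
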